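/- Define the (n+1)×(n+1) diagonal matrix D_R with entries d^R_j = (a₁a₂^{-1}t^{-j};t)_{n−j}(a₂b₁;t)_j / ((a₁b₂;t)_{n−j}(a₁^{-1}a₂t^{-(n−j)};t)_j). Then ∏_{j=0}^{n} d^R_j = (−a₁a₂^{-1})^{C(n+1,2)} ∏_{i=1}^{n} (a₂b₁;t)_i/(a₁b₂;t)_i, where C(n+1,2) = n(n+1)/2. -/

import Mathlib

open scoped BigOperators

/-- The c-shifted factorial (x;c)_k = (1−x)(1−cx)⋯(1−c^{k−1}x). -/
noncomputable def qPoch (x c : ℂ) (k : ℕ) : ℂ :=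
  ∏ i ∈ Finset.range k, (1 - c ^ i * x)

lemma qPoch_zero (x c : ℂ) : qPoch x c 0 = 1 := by simp [qPoch]

lemma qPoch_succ (x c : ℂ) (k : ℕ) :
    qPoch x c (k + 1) = qPoch x c k * (1 - c ^ k * x) := by
  simp [qPoch, Finset.prod_range_succ]

lemma key_step (u t : ℂ) (hu : u ≠ 0) (ht : t ≠ 0) (n : ℕ) :
    ∏ j ∈ Finset.range (n + 1), (1 - t ^ (n - j) * (u * (t⁻¹) ^ j)) =
      (-u) ^ (n + 1) *
        ∏ j ∈ Finset.range (n + 1), (1 - t ^ j * (u⁻¹ * (t⁻¹) ^ (n - j))) := by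
  have hterm : ∀ j ∈ Finset.range (n + 1),
      (1 - t ^ (n - j) * (u * (t⁻¹) ^ j)) =
        (-u) * (t ^ (n - j) * (t⁻¹) ^ j) *
          (1 - t ^ j * (u⁻¹ * (t⁻¹) ^ (n - j))) := by
    intro j hj
    have ht' : (t : ℂ) ^ j ≠ 0 := pow_ne_zero _ ht
    have ht'' : (t : ℂ) ^ (n - j) ≠ 0 := pow_ne_zero _ ht
    field_simp
    have h1 : t ^ j * t⁻¹ ^ j = 1 := by rw [← mul_pow, mul_inv_cancel₀ ht, one_pow]
    have h2 : t ^ (n - j) * t⁻¹ ^ (n - j) = 1 := by rw [← mul_pow, mul_inv_cancel₀ ht, one_pow]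
    linear_combination -h2 - t ^ (n - j) * t⁻¹ ^ (n - j) * h1
  rw [Finset.prod_congr rfl hterm]
  rw [Finset.prod_mul_distrib, Finset.prod_mul_distrib]
  rw [Finset.prod_const, Finset.card_range]
  have hone : (∏ j ∈ Finset.range (n + 1), t ^ (n - j)) *
      (∏ j ∈ Finset.range (n + 1), (t⁻¹) ^ j) = 1 := by
    rw [Finset.prod_pow_eq_pow_sum, Finset.prod_pow_eq_pow_sum]
    have hsum : ∑ j ∈ Finset.range (n + 1), (n - j) = ∑ j ∈ Finset.range (n + 1), j := by
      rw [← Finset.sum_range_reflect (fun j => j) (n + 1)]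
      simp
    rw [hsum, ← mul_pow, mul_inv_cancel₀ ht, one_pow]
  rw [Finset.prod_mul_distrib, hone]
  ring

lemma key (u t : ℂ) (hu : u ≠ 0) (ht : t ≠ 0) (n : ℕ) :
    ∏ j ∈ Finset.range (n + 1), qPoch (u * (t⁻¹) ^ j) t (n - j) =
      (-u) ^ (∑ i ∈ Finset.range (n + 1), i) *
        ∏ j ∈ Finset.range (n + 1), qPoch (u⁻¹ * (t⁻¹) ^ (n - j)) t j := by
  induction n with
  | zero => simp [qPoch]
  | succ n ih =>
    have hf : ∏ j ∈ Finset.range (n + 2), qPoch (u * (t⁻¹) ^ j) t (n + 1 - j) =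
        (∏ j ∈ Finset.range (n + 1), qPoch (u * (t⁻¹) ^ j) t (n - j)) *
          ∏ j ∈ Finset.range (n + 1), (1 - t ^ (n - j) * (u * (t⁻¹) ^ j)) := by
      rw [Finset.prod_range_succ]
      have : ∀ j ∈ Finset.range (n + 1),
          qPoch (u * (t⁻¹) ^ j) t (n + 1 - j) =
            qPoch (u * (t⁻¹) ^ j) t (n - j) * (1 - t ^ (n - j) * (u * (t⁻¹) ^ j)) := by
        intro j hj
        have hj' : j ≤ n := Nat.lt_succ_iff.mp (Finset.mem_range.mp hj)
        have : n + 1 - j = (n - j) + 1 := by omega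
        rw [this, qPoch_succ]
      rw [Finset.prod_congr rfl this, Finset.prod_mul_distrib]
      simp [qPoch_zero]
    have hg : ∏ j ∈ Finset.range (n + 2), qPoch (u⁻¹ * (t⁻¹) ^ (n + 1 - j)) t j =
        (∏ j ∈ Finset.range (n + 1), qPoch (u⁻¹ * (t⁻¹) ^ (n - j)) t j) *
          ∏ j ∈ Finset.range (n + 1), (1 - t ^ j * (u⁻¹ * (t⁻¹) ^ (n - j))) := by
      rw [Finset.prod_range_succ']
      have : ∀ j ∈ Finset.range (n + 1),
          qPoch (u⁻¹ * (t⁻¹) ^ (n + 1 - (j + 1))) t (j + 1) =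
            qPoch (u⁻¹ * (t⁻¹) ^ (n - j)) t j * (1 - t ^ j * (u⁻¹ * (t⁻¹) ^ (n - j))) := by
        intro j hj
        have : n + 1 - (j + 1) = n - j := by omega
        rw [this, qPoch_succ]
      rw [Finset.prod_congr rfl this, Finset.prod_mul_distrib]
      simp [qPoch_zero, mul_comm]
    have hsum : ∑ i ∈ Finset.range (n + 2), i = (∑ i ∈ Finset.range (n + 1), i) + (n + 1) :=
      Finset.sum_range_succ _ _
    rw [hf, hg, ih, key_step u t hu ht n, hsum, pow_add]
    ring

/-- The determinant of the R-matrix: product of the diagonal entries of its Gauss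
decomposition. -/
theorem det_R_matrix (n : ℕ) (a₁ a₂ b₁ b₂ t : ℂ)
    (ha₁ : a₁ ≠ 0) (ha₂ : a₂ ≠ 0) (hb₁ : b₁ ≠ 0) (hb₂ : b₂ ≠ 0) (ht : t ≠ 0)
    (hd1 : ∀ j ≤ n, qPoch (a₁ * b₂) t (n - j) ≠ 0)
    (hd2 : ∀ j ≤ n, qPoch (a₁⁻¹ * a₂ * (t⁻¹) ^ (n - j)) t j ≠ 0) :
    (∏ j ∈ Finset.range (n + 1),
        qPoch (a₁ * a₂⁻¹ * (t⁻¹) ^ j) t (n - j) * qPoch (a₂ * b₁) t j /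
          (qPoch (a₁ * b₂) t (n - j) * qPoch (a₁⁻¹ * a₂ * (t⁻¹) ^ (n - j)) t j)) =
      (-(a₁ * a₂⁻¹)) ^ (n * (n + 1) / 2) *
        ∏ i ∈ Finset.range n, qPoch (a₂ * b₁) t (i + 1) / qPoch (a₁ * b₂) t (i + 1) := by
  set u : ℂ := a₁ * a₂⁻¹ with hu_def
  have hu : u ≠ 0 := mul_ne_zero ha₁ (inv_ne_zero ha₂)
  have huinv : a₁⁻¹ * a₂ = u⁻¹ := by
    rw [hu_def, mul_inv, inv_inv]
  -- products of denominators are nonzero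
  have hB : (∏ j ∈ Finset.range (n + 1), qPoch (a₁⁻¹ * a₂ * (t⁻¹) ^ (n - j)) t j) ≠ 0 :=
    Finset.prod_ne_zero_iff.mpr fun j hj =>
      hd2 j (Nat.lt_succ_iff.mp (Finset.mem_range.mp hj))
  have hD : (∏ j ∈ Finset.range (n + 1), qPoch (a₁ * b₂) t (n - j)) ≠ 0 :=
    Finset.prod_ne_zero_iff.mpr fun j hj =>
      hd1 j (Nat.lt_succ_iff.mp (Finset.mem_range.mp hj))
  -- split the big product
  rw [Finset.prod_div_distrib, Finset.prod_mul_distrib, Finset.prod_mul_distrib]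
  -- the key identity
  have hkey := key u t hu ht n
  rw [← huinv] at hkey
  have hexp : n * (n + 1) / 2 = ∑ i ∈ Finset.range (n + 1), i := by
    rw [Finset.sum_range_id]
    simp [Nat.mul_comm]
  -- product of qPoch (a₂*b₁) over range (n+1) equals product over range n of (i+1)
  have hC : ∏ j ∈ Finset.range (n + 1), qPoch (a₂ * b₁) t j =
      ∏ i ∈ Finset.range n, qPoch (a₂ * b₁) t (i + 1) := by
    rw [Finset.prod_range_succ']
    simp [qPoch_zero]
  have hDrefl : ∏ j ∈ Finset.range (n + 1), qPoch (a₁ * b₂) t (n - j) =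
      ∏ i ∈ Finset.range n, qPoch (a₁ * b₂) t (i + 1) := by
    rw [show (∏ j ∈ Finset.range (n + 1), qPoch (a₁ * b₂) t (n - j)) =
        ∏ j ∈ Finset.range (n + 1), qPoch (a₁ * b₂) t j from ?_]
    · rw [Finset.prod_range_succ']
      simp [qPoch_zero]
    · rw [← Finset.prod_range_reflect (fun j => qPoch (a₁ * b₂) t j) (n + 1)]
      apply Finset.prod_congr rfl
      intro j hj
      norm_num
  rw [hDrefl] at hD
  rw [hkey, hexp, hC, Finset.prod_div_distrib, hDrefl]
  set N : ℕ := ∑ i ∈ Finset.range (n + 1), i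
  set B := ∏ j ∈ Finset.range (n + 1), qPoch (a₁⁻¹ * a₂ * (t⁻¹) ^ (n - j)) t j with hB_def
  set C := ∏ i ∈ Finset.range n, qPoch (a₂ * b₁) t (i + 1) with hC_def
  set D := ∏ i ∈ Finset.range n, qPoch (a₁ * b₂) t (i + 1) with hD_def
  rw [div_eq_iff (mul_ne_zero hD hB)]
  field_simp
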